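/- Let H be a real Hilbert space, let r be a natural number, let U : H →L[ℝ] EuclideanSpace ℝ (Fin r) be a bounded linear map, and let S be a skew-adjoint linear operator on EuclideanSpace ℝ (Fin r) (S† = −S). Define K := U† ∘ S ∘ U, a bounded skew-adjoint operator on H. Then: (i) the operator 1_H − (1/2) • K is invertible; (ii) the operator 1_r − (1/2) • ((U ∘ U†) ∘ S) on EuclideanSpace ℝ (Fin r) is invertible; and (iii) the Woodbury identity holds: (1_H − (1/2) • K)⁻¹ = 1_H + (1/2) • (U† ∘ S ∘ (1_r − (1/2) • ((U ∘ U†) ∘ S))⁻¹ ∘ U). -/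

import Mathlib

open ContinuousLinearMap

/-- Abstract Woodbury: if `1 - B∘A` has a two-sided inverse `N`, then `1 - A∘B` has
two-sided inverse `1 + A∘N∘B`. -/
lemma woodbury_aux {H K : Type*} [NormedAddCommGroup H] [NormedSpace ℝ H]
    [NormedAddCommGroup K] [NormedSpace ℝ K]
    (A : K →L[ℝ] H) (B : H →L[ℝ] K) (N : K →L[ℝ] K)
    (h1 : (1 - B.comp A).comp N = 1) (h2 : N.comp (1 - B.comp A) = 1) :
    (1 - A.comp B).comp (1 + A.comp (N.comp B)) = 1 ∧
    (1 + A.comp (N.comp B)).comp (1 - A.comp B) = 1 := by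
  have key1 : N - (B.comp A).comp N = 1 := by
    have := h1; rwa [sub_comp, one_def, id_comp] at this
  have key2 : N - N.comp (B.comp A) = 1 := by
    have := h2; rwa [comp_sub, one_def, comp_id] at this
  constructor
  · have : (1 - A.comp B).comp (1 + A.comp (N.comp B))
        = 1 + A.comp ((N - (B.comp A).comp N).comp B) - A.comp B := by
      simp only [comp_add, add_comp, sub_comp, comp_sub, one_def, id_comp, comp_id, comp_assoc]
      abel
    rw [this, key1]; simp [one_def, id_comp]
  · have : (1 + A.comp (N.comp B)).comp (1 - A.comp B)
        = 1 + A.comp ((N - N.comp (B.comp A)).comp B) - A.comp B := by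
      simp only [comp_add, add_comp, sub_comp, comp_sub, one_def, id_comp, comp_id, comp_assoc]
      abel
    rw [this, key2]; simp [one_def, id_comp]

theorem stmt_16 {H : Type*} [NormedAddCommGroup H] [InnerProductSpace ℝ H] [CompleteSpace H]
    (r : ℕ)
    (U : H →L[ℝ] EuclideanSpace ℝ (Fin r))
    (S : EuclideanSpace ℝ (Fin r) →L[ℝ] EuclideanSpace ℝ (Fin r))
    (hS : adjoint S = -S) :
    IsUnit (1 - (1 / 2 : ℝ) • ((adjoint U).comp (S.comp U))) ∧
    IsUnit (1 - (1 / 2 : ℝ) • ((U.comp (adjoint U)).comp S)) ∧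
    Ring.inverse (1 - (1 / 2 : ℝ) • ((adjoint U).comp (S.comp U)))
      = 1 + (1 / 2 : ℝ) • ((adjoint U).comp (S.comp
          ((Ring.inverse (1 - (1 / 2 : ℝ) • ((U.comp (adjoint U)).comp S))).comp U))) := by
  set E := EuclideanSpace ℝ (Fin r)
  set M : E →L[ℝ] E := 1 - (1 / 2 : ℝ) • ((U.comp (adjoint U)).comp S) with hMdef
  -- skew-adjointness gives ⟪S x, x⟫ = 0
  have hSx : ∀ x : E, (inner ℝ (S x) x : ℝ) = 0 := by
    intro x
    have h1 : (inner ℝ x (adjoint S x) : ℝ) = inner ℝ (S x) x := adjoint_inner_right S x x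
    rw [hS] at h1
    simp only [neg_apply, inner_neg_right] at h1
    have h2 : (inner ℝ x (S x) : ℝ) = inner ℝ (S x) x := real_inner_comm _ _
    linarith
  -- M is injective
  have hker : ∀ x : E, M x = 0 → x = 0 := by
    intro x hx
    have hx' : x = (1 / 2 : ℝ) • U ((adjoint U) (S x)) := by
      have : M x = 0 := hx
      simp only [hMdef, sub_apply, one_apply_eq_self, smul_apply, comp_apply] at this
      linear_combination (norm := module) this
    set y : H := (adjoint U) (S x) with hy
    have hyy : (inner ℝ y y : ℝ) = 0 := by
      have : (inner ℝ y y : ℝ) = inner ℝ (S x) (U y) := by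
        rw [hy, adjoint_inner_left]
      rw [this]
      have hUy : U y = (2 : ℝ) • x := by
        rw [hx']; module
      rw [hUy, real_inner_smul_right, hSx, mul_zero]
    have hy0 : y = 0 := by
      rwa [inner_self_eq_zero] at hyy
    rw [hx', hy0, map_zero, smul_zero]
  have hinj : Function.Injective M := by
    intro a b hab
    have h0 : M (a - b) = 0 := by rw [map_sub, hab, sub_self]
    have := hker _ h0
    exact sub_eq_zero.mp this
  -- hence bijective (finite dimension) and a unit
  have hbij : Function.Bijective M := by
    refine ⟨hinj, ?_⟩
    have := (LinearMap.injective_iff_surjective (f := (M : E →ₗ[ℝ] E))).mp hinj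
    exact this
  have hMunit : IsUnit M := isUnit_iff_bijective.mpr hbij
  set N : E →L[ℝ] E := Ring.inverse M with hNdef
  have hMN : M.comp N = 1 := by
    have := Ring.mul_inverse_cancel M hMunit
    simpa [hNdef, mul_def] using this
  have hNM : N.comp M = 1 := by
    have := Ring.inverse_mul_cancel M hMunit
    simpa [hNdef, mul_def] using this
  -- apply abstract Woodbury with A = ½ • (U† ∘ S), B = U
  set A : E →L[ℝ] H := (1 / 2 : ℝ) • ((adjoint U).comp S) with hA
  have hBA : (1 : E →L[ℝ] E) - U.comp A = M := by
    rw [hA, hMdef, comp_smul, comp_assoc]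
  have hAB : (1 : H →L[ℝ] H) - A.comp U
      = 1 - (1 / 2 : ℝ) • ((adjoint U).comp (S.comp U)) := by
    rw [hA, smul_comp, comp_assoc]
  obtain ⟨w1, w2⟩ := woodbury_aux A U N (by rw [hBA]; exact hMN) (by rw [hBA]; exact hNM)
  have hform : (1 : H →L[ℝ] H) + A.comp (N.comp U)
      = 1 + (1 / 2 : ℝ) • ((adjoint U).comp (S.comp (N.comp U))) := by
    rw [hA, smul_comp, comp_assoc]
  rw [hAB] at w1 w2
  have hKunit : IsUnit (1 - (1 / 2 : ℝ) • ((adjoint U).comp (S.comp U))) :=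
    ⟨⟨_, 1 + A.comp (N.comp U), w1, w2⟩, rfl⟩
  refine ⟨hKunit, hMunit, ?_⟩
  have := Ring.inverse_unit (⟨_, 1 + A.comp (N.comp U), w1, w2⟩ :
    (H →L[ℝ] H)ˣ)
  rw [← hform]
  exact this
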